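/- Let ω be a radial weight with ω̂(r) = ∫_r^1 ω(s) ds > 0 for all 0 ≤ r < 1. If there exist C > 0 and β > 0 with ω̂(r) ≤ C·((1-r)/(1-t))^β · ω̂(t) for all 0 ≤ r ≤ t < 1, then there exists C' > 0 such that the moments ω_x = ∫_0^1 s^x ω(s) ds satisfy ω_x ≤ C'·ω̂(1 - 1/x) for all x ∈ [1,∞). -/

import Mathlib

open MeasureTheory Set

/-- `what ω r = ∫_r^1 ω(s) ds`. -/
noncomputable def what (ω : ℝ → ℝ) (r : ℝ) : ℝ := ∫ s in r..(1:ℝ), ω s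

/-- numeric lemma: `(2^n)^β * exp(-2^n) ≤ (4β)^β * exp(-3/4)^n`. -/
lemma aux_numeric (β : ℝ) (hβ : 0 < β) (n : ℕ) :
    ((2:ℝ)^n)^β * Real.exp (-(2:ℝ)^n) ≤ (4*β)^β * Real.exp (-(3/4:ℝ))^n := by
  set m : ℝ := (2:ℝ)^n with hm
  have hm1 : (n:ℝ) + 1 ≤ m := by
    have := Nat.lt_two_pow_self (n := n)
    have : (n:ℝ) + 1 ≤ ((2:ℕ)^n : ℕ) := by exact_mod_cast this
    simpa [hm] using this
  have hm0 : (0:ℝ) ≤ m := by positivity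
  have h4β : (0:ℝ) < 4*β := by linarith
  -- m ≤ 4β * exp(m/(4β))
  have step1 : m ≤ (4*β) * Real.exp (m/(4*β)) := by
    have h1 : m/(4*β) ≤ Real.exp (m/(4*β)) := by
      have := Real.add_one_le_exp (m/(4*β) - 1)
      have h2 : Real.exp (m/(4*β) - 1) ≤ Real.exp (m/(4*β)) := by
        apply Real.exp_le_exp.2; linarith
      linarith
    calc m = (4*β) * (m/(4*β)) := by field_simp
    _ ≤ (4*β) * Real.exp (m/(4*β)) := by
        exact mul_le_mul_of_nonneg_left h1 h4β.le
  -- m^β ≤ (4β)^β * exp(m/4)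
  have step2 : m ^ β ≤ (4*β)^β * Real.exp (m/4) := by
    have h1 : m ^ β ≤ ((4*β) * Real.exp (m/(4*β))) ^ β :=
      Real.rpow_le_rpow hm0 step1 hβ.le
    have h2 : ((4*β) * Real.exp (m/(4*β))) ^ β
        = (4*β)^β * Real.exp (m/(4*β)) ^ β :=
      Real.mul_rpow h4β.le (Real.exp_pos _).le
    have h3 : Real.exp (m/(4*β)) ^ β = Real.exp (m/4) := by
      rw [← Real.exp_mul]
      congr 1
      field_simp
    rw [h2, h3] at h1; exact h1
  have step3 : m ^ β * Real.exp (-m) ≤ (4*β)^β * Real.exp (-(3/4) * m) := by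
    calc m ^ β * Real.exp (-m) ≤ ((4*β)^β * Real.exp (m/4)) * Real.exp (-m) := by
          exact mul_le_mul_of_nonneg_right step2 (Real.exp_pos _).le
    _ = (4*β)^β * Real.exp (-(3/4) * m) := by
          rw [mul_assoc, ← Real.exp_add]; ring_nf
  have step4 : Real.exp (-(3/4) * m) ≤ Real.exp (-(3/4:ℝ))^n := by
    have h1 : Real.exp (-(3/4) * m) ≤ Real.exp (-(3/4) * ((n:ℝ)+1)) := by
      apply Real.exp_le_exp.2; nlinarith
    have h2 : Real.exp (-(3/4) * ((n:ℝ)+1)) = Real.exp (-(3/4:ℝ))^(n+1) := by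
      rw [← Real.exp_nat_mul]; congr 1; push_cast; ring
    have h3 : Real.exp (-(3/4:ℝ))^(n+1) ≤ Real.exp (-(3/4:ℝ))^n := by
      apply pow_le_pow_of_le_one (Real.exp_pos _).le _ (Nat.le_succ n)
      rw [Real.exp_le_one_iff]; norm_num
    linarith
  calc m ^ β * Real.exp (-m) ≤ (4*β)^β * Real.exp (-(3/4) * m) := step3
  _ ≤ (4*β)^β * Real.exp (-(3/4:ℝ))^n := by
      apply mul_le_mul_of_nonneg_left step4; positivity

theorem stmt_1 (ω : ℝ → ℝ)
    (hint : IntegrableOn ω (Set.Ico (0:ℝ) 1))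
    (hnn : ∀ r ∈ Set.Ico (0:ℝ) 1, 0 ≤ ω r)
    (hpos : ∀ r ∈ Set.Ico (0:ℝ) 1, 0 < what ω r)
    (C β : ℝ) (hC : 0 < C) (hβ : 0 < β)
    (hDD : ∀ r t : ℝ, 0 ≤ r → r ≤ t → t < 1 →
      what ω r ≤ C * ((1 - r) / (1 - t)) ^ β * what ω t) :
    ∃ C' : ℝ, 0 < C' ∧ ∀ x : ℝ, 1 ≤ x →
      (∫ s in (0:ℝ)..1, s ^ x * ω s) ≤ C' * what ω (1 - 1 / x) := by
  set q : ℝ := Real.exp (-(3/4:ℝ)) with hq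
  have hq0 : 0 < q := Real.exp_pos _
  have hq1 : q < 1 := by rw [hq, Real.exp_lt_one_iff]; norm_num
  set G : ℝ := C * 2^β * (4*β)^β with hG
  have hG0 : 0 < G := by
    have : (0:ℝ) < 2^β := Real.rpow_pos_of_pos (by norm_num) β
    have : (0:ℝ) < (4*β)^β := Real.rpow_pos_of_pos (by linarith) β
    positivity
  have hq1' : 0 < 1 - q := by linarith
  refine ⟨G / (1-q) + 1, by positivity, ?_⟩
  intro x hx
  have hx0 : (0:ℝ) < x := by linarith
  set t : ℝ := 1 - 1/x with htdef
  have ht0 : 0 ≤ t := by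
    have : 1/x ≤ 1 := by rw [div_le_one hx0]; exact hx
    rw [htdef]; linarith
  have ht1 : t < 1 := by
    have : 0 < 1/x := by positivity
    rw [htdef]; linarith
  -- integrability of ω on Icc 0 1
  have hωIcc : IntegrableOn ω (Icc (0:ℝ) 1) :=
    (integrableOn_Icc_iff_integrableOn_Ico).2 hint
  -- continuity of s ↦ s^x
  have hcont : Continuous (fun s : ℝ => s ^ x) := by
    rw [continuous_iff_continuousAt]
    intro s
    exact Real.continuousAt_rpow_const s x (Or.inr hx0.le)
  -- integrability of f on Icc 0 1
  have hfIcc : IntegrableOn (fun s => s ^ x * ω s) (Icc (0:ℝ) 1) := by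
    apply Integrable.bdd_mul (c := 1) hωIcc
      (hcont.aestronglyMeasurable.restrict)
    · filter_upwards [ae_restrict_mem measurableSet_Icc] with s hs
      rw [Real.norm_eq_abs, abs_of_nonneg (Real.rpow_nonneg hs.1 x)]
      exact Real.rpow_le_one hs.1 hs.2 hx0.le
  have hIIf : ∀ a b : ℝ, 0 ≤ a → a ≤ 1 → 0 ≤ b → b ≤ 1 →
      IntervalIntegrable (fun s => s ^ x * ω s) volume a b := by
    intro a b ha0 ha1 hb0 hb1
    apply IntegrableOn.intervalIntegrable
    apply hfIcc.mono_set
    intro y hy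
    rcases hy with hy
    constructor
    · exact le_trans (le_min ha0 hb0) (by simpa using hy.1)
    · exact le_trans (by simpa using hy.2) (max_le ha1 hb1)
  have hIIω : ∀ a b : ℝ, 0 ≤ a → a ≤ 1 → 0 ≤ b → b ≤ 1 →
      IntervalIntegrable ω volume a b := by
    intro a b ha0 ha1 hb0 hb1
    apply IntegrableOn.intervalIntegrable
    apply hωIcc.mono_set
    intro y hy
    constructor
    · exact le_trans (le_min ha0 hb0) (by simpa using hy.1)
    · exact le_trans (by simpa using hy.2) (max_le ha1 hb1)
  -- ∫_a^b ω ≤ what ω a  for 0 ≤ a ≤ b ≤ 1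
  have hwhat_nonneg : ∀ a : ℝ, 0 ≤ a → a ≤ 1 → 0 ≤ what ω a := by
    intro a ha0 ha1
    rcases eq_or_lt_of_le ha1 with h|h
    · simp [what, h]
    · exact (hpos a ⟨ha0, h⟩).le
  have hstep_what : ∀ a b : ℝ, 0 ≤ a → a ≤ b → b ≤ 1 →
      (∫ s in a..b, ω s) ≤ what ω a := by
    intro a b ha0 hab hb1
    have hdecomp : (∫ s in a..b, ω s) + (∫ s in b..1, ω s) = what ω a := by
      apply intervalIntegral.integral_add_adjacent_intervals
        (hIIω a b ha0 (hab.trans hb1) (ha0.trans hab) hb1)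
        (hIIω b 1 (ha0.trans hab) hb1 zero_le_one le_rfl)
    have hnn2 : 0 ≤ ∫ s in b..1, ω s := hwhat_nonneg b (ha0.trans hab) hb1
    linarith
  -- the dyadic radii
  set r : ℕ → ℝ := fun n => max 0 (1 - 2^n/x) with hr
  have hr0 : ∀ n, 0 ≤ r n := fun n => le_max_left _ _
  have hrt : ∀ n, r n ≤ t := by
    intro n
    apply max_le ht0
    have h1 : (1:ℝ) ≤ 2^n := one_le_pow₀ (by norm_num)
    have h2 : 1/x ≤ 2^n/x := by gcongr
    rw [htdef]; linarith
  have hr1 : ∀ n, r n ≤ 1 := fun n => (hrt n).trans ht1.le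
  have hrmono : ∀ n, r (n+1) ≤ r n := by
    intro n
    apply max_le (le_max_left _ _)
    have h2 : (2:ℝ)^n ≤ 2^(n+1) := by gcongr <;> norm_num
    have : (2:ℝ)^n/x ≤ 2^(n+1)/x := by gcongr
    have : (1:ℝ) - 2^(n+1)/x ≤ 1 - 2^n/x := by linarith
    exact this.trans (le_max_right _ _)
  have hr0t : r 0 = t := by
    rw [hr]; simp only [pow_zero]; exact max_eq_right ht0
  have hwt : 0 ≤ what ω t := hwhat_nonneg t ht0 ht1.le
  -- the piece bound
  have hpiece : ∀ n : ℕ, (∫ s in r (n+1)..r n, s^x * ω s) ≤ G * q^n * what ω t := by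
    intro n
    have h1 : (∫ s in r (n+1)..r n, s^x * ω s) ≤ (r n)^x * ∫ s in r (n+1)..r n, ω s := by
      rw [← intervalIntegral.integral_const_mul]
      apply intervalIntegral.integral_mono_on (hrmono n)
        (hIIf _ _ (hr0 _) (hr1 _) (hr0 _) (hr1 _))
        ((hIIω _ _ (hr0 _) (hr1 _) (hr0 _) (hr1 _)).const_mul _)
      intro s hs
      have hs0 : 0 ≤ s := le_trans (hr0 (n+1)) hs.1
      have hsx : s^x ≤ (r n)^x := Real.rpow_le_rpow hs0 hs.2 hx0.le
      have hω0 : 0 ≤ ω s := hnn s ⟨hs0, lt_of_le_of_lt (hs.2.trans (hrt n)) ht1⟩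
      exact mul_le_mul_of_nonneg_right hsx hω0
    have h2 : (∫ s in r (n+1)..r n, ω s) ≤ what ω (r (n+1)) :=
      hstep_what _ _ (hr0 _) (hrmono n) (hr1 n)
    have h3 : (r n)^x ≤ Real.exp (-(2:ℝ)^n) := by
      have hb : r n ≤ Real.exp (-((2:ℝ)^n/x)) := by
        rcases le_or_gt (1 - (2:ℝ)^n/x) 0 with h|h
        · rw [hr]; simp only [max_eq_left h]
          exact (Real.exp_pos _).le
        · have he : r n = 1 - 2^n/x := max_eq_right h.le
          rw [he]
          have := Real.add_one_le_exp (-((2:ℝ)^n/x))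
          linarith
      calc (r n)^x ≤ (Real.exp (-((2:ℝ)^n/x)))^x := Real.rpow_le_rpow (hr0 n) hb hx0.le
      _ = Real.exp (-((2:ℝ)^n/x) * x) := by rw [← Real.exp_mul]
      _ = Real.exp (-(2:ℝ)^n) := by congr 1; field_simp
    have h4 : what ω (r (n+1)) ≤ C * ((2:ℝ)^(n+1))^β * what ω t := by
      have hd := hDD (r (n+1)) t (hr0 _) (hrt _) ht1
      have h1t : 1 - t = 1/x := by rw [htdef]; ring
      have hratio : (1 - r (n+1)) / (1 - t) ≤ (2:ℝ)^(n+1) := by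
        rw [h1t, div_le_iff₀ (by positivity : (0:ℝ) < 1/x)]
        have hmr : (1:ℝ) - 2^(n+1)/x ≤ r (n+1) := le_max_right _ _
        have : 1 - r (n+1) ≤ 2^(n+1)/x := by linarith
        calc 1 - r (n+1) ≤ 2^(n+1)/x := this
        _ = (2:ℝ)^(n+1) * (1/x) := by ring
      have hratio0 : 0 ≤ (1 - r (n+1)) / (1 - t) :=
        div_nonneg (by linarith [hr1 (n+1)]) (by linarith)
      have hrp := Real.rpow_le_rpow hratio0 hratio hβ.le
      calc what ω (r (n+1)) ≤ C * ((1 - r (n+1))/(1-t))^β * what ω t := hd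
      _ ≤ C * ((2:ℝ)^(n+1))^β * what ω t := by
          apply mul_le_mul_of_nonneg_right _ hwt
          exact mul_le_mul_of_nonneg_left hrp hC.le
    have hw1 : 0 ≤ what ω (r (n+1)) := hwhat_nonneg _ (hr0 _) (hr1 _)
    have hsplit : ((2:ℝ)^(n+1))^β = ((2:ℝ)^n)^β * 2^β := by
      rw [pow_succ, Real.mul_rpow (by positivity) (by norm_num)]
    have hnum := aux_numeric β hβ n
    calc (∫ s in r (n+1)..r n, s^x * ω s)
        ≤ (r n)^x * ∫ s in r (n+1)..r n, ω s := h1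
    _ ≤ (r n)^x * what ω (r (n+1)) := by
        apply mul_le_mul_of_nonneg_left h2 (Real.rpow_nonneg (hr0 n) x)
    _ ≤ Real.exp (-(2:ℝ)^n) * (C * ((2:ℝ)^(n+1))^β * what ω t) := by
        apply mul_le_mul h3 h4 hw1 (Real.exp_pos _).le
    _ = C * 2^β * (((2:ℝ)^n)^β * Real.exp (-(2:ℝ)^n)) * what ω t := by
        rw [hsplit]; ring
    _ ≤ C * 2^β * ((4*β)^β * q^n) * what ω t := by
        apply mul_le_mul_of_nonneg_right _ hwt
        apply mul_le_mul_of_nonneg_left hnum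
        positivity
    _ = G * q^n * what ω t := by rw [hG]; ring
  -- the telescoping sum
  have hsum : ∀ n : ℕ, (∫ s in r n..r 0, s^x * ω s)
      ≤ (∑ k ∈ Finset.range n, G * q^k) * what ω t := by
    intro n
    induction n with
    | zero => simp
    | succ n ih =>
      have hadd := intervalIntegral.integral_add_adjacent_intervals
        (hIIf (r (n+1)) (r n) (hr0 _) (hr1 _) (hr0 _) (hr1 _))
        (hIIf (r n) (r 0) (hr0 _) (hr1 _) (hr0 _) (hr1 _))
      rw [← hadd, Finset.sum_range_succ, add_mul]
      have := hpiece n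
      linarith
  -- choose N with r N = 0
  set N : ℕ := Nat.ceil x with hN
  have hrN : r N = 0 := by
    have h1 : x ≤ (N:ℝ) := Nat.le_ceil x
    have h2 : (N:ℝ) ≤ 2^N := by
      have := Nat.lt_two_pow_self (n := N)
      exact_mod_cast this.le
    have h3 : (1:ℝ) ≤ 2^N/x := by
      rw [le_div_iff₀ hx0]; linarith
    rw [hr]; exact max_eq_left (by linarith)
  have hgeo : (∑ k ∈ Finset.range N, G * q^k) ≤ G/(1-q) := by
    rw [← Finset.mul_sum]
    rw [div_eq_mul_inv, ← div_eq_mul_inv]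
    apply mul_le_mul_of_nonneg_left _ hG0.le
    have h := geom_sum_eq (by linarith : q ≠ 1) N
    rw [h]
    have e : (q^N - 1)/(q-1) = (1 - q^N)/(1-q) := by
      rw [div_eq_div_iff (by linarith) (by linarith)]; ring
    rw [e]
    have hnum1 : 1 - q^N ≤ 1 := by nlinarith [pow_nonneg hq0.le N]
    rw [← one_div]
    exact (div_le_div_iff_of_pos_right hq1').2 hnum1
  have hleft : (∫ s in (0:ℝ)..t, s^x * ω s) ≤ (G/(1-q)) * what ω t := by
    calc (∫ s in (0:ℝ)..t, s^x * ω s) = ∫ s in r N..r 0, s^x * ω s := by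
          rw [hrN, hr0t]
    _ ≤ (∑ k ∈ Finset.range N, G * q^k) * what ω t := hsum N
    _ ≤ (G/(1-q)) * what ω t := mul_le_mul_of_nonneg_right hgeo hwt
  have hright : (∫ s in t..(1:ℝ), s^x * ω s) ≤ what ω t := by
    have hmon : (∫ s in t..(1:ℝ), s^x * ω s) ≤ ∫ s in t..(1:ℝ), ω s := by
      apply intervalIntegral.integral_mono_on ht1.le
        (hIIf t 1 ht0 ht1.le zero_le_one le_rfl)
        (hIIω t 1 ht0 ht1.le zero_le_one le_rfl)
      intro s hs
      rcases eq_or_lt_of_le hs.2 with h|h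
      · rw [h, Real.one_rpow, one_mul]
      · have hω0 : 0 ≤ ω s := hnn s ⟨ht0.trans hs.1, h⟩
        have : s^x ≤ 1 := Real.rpow_le_one (ht0.trans hs.1) hs.2 hx0.le
        exact mul_le_of_le_one_left hω0 this
    exact hmon.trans_eq rfl
  have hadd := intervalIntegral.integral_add_adjacent_intervals
    (hIIf 0 t le_rfl zero_le_one ht0 ht1.le)
    (hIIf t 1 ht0 ht1.le zero_le_one le_rfl)
  rw [← hadd, add_mul, one_mul]
  linarith
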